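/- Assume C satisfies condition (⋆). The following are equivalent: (1) C is B-normal; (2) for all distinct maximal elements p,q of C there exists a complemented a ∈ C with a ≤ p and a⊥ ≤ q; (3) for all distinct maximal elements p,q of C there exists a complemented a ∈ C with a ≤ O(p) and a⊥ ≤ O(q). -/

import Mathlib

open CompleteLattice

/-- A complete lattice equipped with a commutator operation, axiomatizing the congruence
lattice of an algebra in a semidegenerate congruence-modular variety whose compact
congruences are closed under the commutator. -/
class CommutatorLattice (C : Type*) [CompleteLattice C] where
  comm : C → C → C
  comm_comm : ∀ a b : C, comm a b = comm b a
  comm_sSup : ∀ (s : Set C) (b : C), comm (sSup s) b = ⨆ a ∈ s, comm a b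
  comm_le_inf : ∀ a b : C, comm a b ≤ a ⊓ b
  comm_top : ∀ a : C, comm a ⊤ = a
  compactlyGenerated : ∀ x : C,
    ∃ s : Set C, (∀ a ∈ s, IsCompactElement a) ∧ sSup s = x
  top_isCompact : IsCompactElement (⊤ : C)
  comm_isCompact : ∀ a b : C, IsCompactElement a → IsCompactElement b →
    IsCompactElement (comm a b)

namespace CommutatorLattice

variable {C : Type*} [CompleteLattice C] [CommutatorLattice C]

/-- The residuation `a → b := ⨆ {c | [a,c] ≤ b}`. -/
def resid (a b : C) : C := sSup {c : C | comm a c ≤ b}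

/-- The annihilator `a⊥ := a → ⊥`. -/
def ann (a : C) : C := resid a ⊥

/-- Iterated commutator: `cpow a n = [a,a]^n`, with the convention `[a,a]^0 = a`.
Note that `[a,b]^n` for `n ≥ 1` equals `cpow (comm a b) (n-1)`. -/
def cpow (a : C) : ℕ → C
  | 0 => a
  | n + 1 => comm (cpow a n) (cpow a n)

/-- Prime elements: `p ≠ ⊤` and `[a,b] ≤ p` implies `a ≤ p` or `b ≤ p`. -/
def IsPrime (p : C) : Prop := p ≠ ⊤ ∧ ∀ a b : C, comm a b ≤ p → a ≤ p ∨ b ≤ p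

/-- The radical `ρ(a) := ⨅ {p prime | a ≤ p}`. -/
def radical (a : C) : C := sInf {p : C | IsPrime p ∧ a ≤ p}

variable (C) in
/-- `C` is semiprime if `ρ(⊥) = ⊥`. -/
def Semiprime : Prop := radical (⊥ : C) = ⊥

variable (C) in
/-- Condition (⋆): for all compact `a`, `b` and all `n ≥ 1` there is `m ≥ 0` with
`[[a,a]^m, [b,b]^m] ≤ [a,b]^n`.  Here `cpow (comm a b) n = [a,b]^(n+1)`, so `n : ℕ`
ranges exactly over the exponents `≥ 1` of the paper. -/
def Star : Prop := ∀ a b : C, IsCompactElement a → IsCompactElement b →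
  ∀ n : ℕ, ∃ m : ℕ, comm (cpow a m) (cpow b m) ≤ cpow (comm a b) n

/-- Pure elements: `t ⊔ a⊥ = ⊤` for every compact `a ≤ t`. -/
def IsPure (t : C) : Prop := ∀ a : C, IsCompactElement a → a ≤ t → t ⊔ ann a = ⊤

/-- w-pure elements: `t ⊔ (a → ρ(⊥)) = ⊤` for every compact `a ≤ t`. -/
def IsWPure (t : C) : Prop :=
  ∀ a : C, IsCompactElement a → a ≤ t → t ⊔ resid a (radical ⊥) = ⊤

/-- Complemented elements. -/
def IsComplEl (a : C) : Prop := ∃ b : C, a ⊔ b = ⊤ ∧ a ⊓ b = ⊥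

/-- Regular elements: joins of sets of complemented elements. -/
def IsRegular (t : C) : Prop := ∃ S : Set C, (∀ a ∈ S, IsComplEl a) ∧ t = sSup S

/-- Max-regular elements: maximal among regular elements distinct from `⊤`. -/
def IsMaxRegular (t : C) : Prop :=
  IsRegular t ∧ t ≠ ⊤ ∧ ∀ u : C, IsRegular u → u ≠ ⊤ → t ≤ u → u = t

/-- Maximal elements of `C \ {⊤}`. -/
def IsMaximal (p : C) : Prop := p ≠ ⊤ ∧ ∀ q : C, q ≠ ⊤ → p ≤ q → q = p

/-- Minimal primes. -/
def IsMinPrime (p : C) : Prop := IsPrime p ∧ ∀ q : C, IsPrime q → q ≤ p → q = p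

variable (C) in
/-- `C` is mp if every prime lies above a unique minimal prime. -/
def MP : Prop := ∀ p : C, IsPrime p → ∃! q : C, IsMinPrime q ∧ q ≤ p

variable (C) in
/-- `C` is PF if `a⊥` is pure for every compact `a`. -/
def PF : Prop := ∀ a : C, IsCompactElement a → IsPure (ann a)

variable (C) in
/-- `C` is PP if `a⊥` is complemented for every compact `a`. -/
def PP : Prop := ∀ a : C, IsCompactElement a → IsComplEl (ann a)

/-- `O(p) := ⨆ {a compact | a⊥ ≰ p}`. -/
def O (p : C) : C := sSup {a : C | IsCompactElement a ∧ ¬ ann a ≤ p}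

variable (C) in
/-- `C` is normal. -/
def Normal : Prop := ∀ t u : C, t ⊔ u = ⊤ →
  ∃ a b : C, t ⊔ a = ⊤ ∧ u ⊔ b = ⊤ ∧ comm a b = ⊥

variable (C) in
/-- `C` is B-normal. -/
def BNormal : Prop := ∀ t u : C, t ⊔ u = ⊤ →
  ∃ a b : C, IsComplEl a ∧ IsComplEl b ∧ t ⊔ a = ⊤ ∧ u ⊔ b = ⊤ ∧ comm a b = ⊥

variable (C) in
/-- `C` is purified. -/
def Purified : Prop := ∀ p q : C, IsMinPrime p → IsMinPrime q → p ≠ q →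
  ∃ a : C, IsComplEl a ∧ a ≤ p ∧ ann a ≤ q

variable (C) in
/-- The prime spectrum of `C`. -/
abbrev Spec := {p : C // IsPrime p}

variable (C) in
/-- The Zariski topology on `Spec C`: the closed sets are the `V(t) = {p | t ≤ p}`,
equivalently the topology generated by the sets `D(t) = {p | t ≰ p}`. -/
def zariskiTop : TopologicalSpace (Spec C) :=
  TopologicalSpace.generateFrom {U : Set (Spec C) | ∃ t : C, U = {p : Spec C | ¬ t ≤ p.1}}

variable (C) in
/-- The flat topology on `Spec C`: generated by the open basis `V(a)`, `a` compact. -/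
def flatTop : TopologicalSpace (Spec C) :=
  TopologicalSpace.generateFrom
    {U : Set (Spec C) | ∃ a : C, IsCompactElement a ∧ U = {p : Spec C | a ≤ p.1}}


section Aux

variable {C : Type*} [CompleteLattice C] [CommutatorLattice C]

lemma comm_sup_left (a b c : C) : comm (a ⊔ b) c = comm a c ⊔ comm b c := by
  have h := comm_sSup ({a, b} : Set C) c
  rw [sSup_pair] at h
  rw [h, iSup_pair]

lemma comm_sup_right (a b c : C) : comm a (b ⊔ c) = comm a b ⊔ comm a c := by
  rw [comm_comm, comm_sup_left, comm_comm b a, comm_comm c a]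

lemma comm_mono_l {a b : C} (c : C) (h : a ≤ b) : comm a c ≤ comm b c := by
  calc comm a c ≤ comm a c ⊔ comm b c := le_sup_left
    _ = comm (a ⊔ b) c := (comm_sup_left a b c).symm
    _ = comm b c := by rw [sup_eq_right.mpr h]

lemma comm_mono_r (a : C) {b c : C} (h : b ≤ c) : comm a b ≤ comm a c := by
  rw [comm_comm a b, comm_comm a c]; exact comm_mono_l a h

lemma comm_bot_left (c : C) : comm (⊥ : C) c = ⊥ := by
  have h := comm_sSup (∅ : Set C) c
  simpa using h

lemma comm_bot_right (a : C) : comm a (⊥ : C) = ⊥ := by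
  rw [comm_comm]; exact comm_bot_left a

lemma comm_ann (a : C) : comm a (ann a) = ⊥ := by
  apply le_bot_iff.mp
  rw [comm_comm]
  unfold ann resid
  rw [comm_sSup]
  exact iSup₂_le fun c hc => le_trans (comm_comm c a ▸ le_refl _) hc

lemma le_ann_of {a c : C} (h : comm a c ≤ ⊥) : c ≤ ann a := le_sSup h

lemma ann_eq_of_compl {a b : C} (h1 : a ⊔ b = ⊤) (h2 : a ⊓ b = ⊥) : ann a = b := by
  apply le_antisymm
  · calc ann a = comm (ann a) ⊤ := (comm_top _).symm
      _ = comm (ann a) (a ⊔ b) := by rw [h1]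
      _ = comm (ann a) a ⊔ comm (ann a) b := comm_sup_right _ _ _
      _ ≤ ⊥ ⊔ b := by
          apply sup_le
          · rw [comm_comm]; exact (comm_ann a).le.trans le_sup_left
          · exact le_sup_right.trans' ((comm_le_inf (ann a) b).trans inf_le_right)
      _ = b := bot_sup_eq b
  · exact le_ann_of (le_trans (comm_le_inf a b) h2.le)

lemma IsComplEl.sup_ann {a : C} (h : IsComplEl a) : a ⊔ ann a = ⊤ := by
  obtain ⟨b, h1, h2⟩ := h
  rw [ann_eq_of_compl h1 h2]; exact h1

lemma IsComplEl.inf_ann {a : C} (h : IsComplEl a) : a ⊓ ann a = ⊥ := by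
  obtain ⟨b, h1, h2⟩ := h
  rw [ann_eq_of_compl h1 h2]; exact h2

lemma IsComplEl.ann_isComplEl {a : C} (h : IsComplEl a) : IsComplEl (ann a) :=
  ⟨a, by rw [sup_comm]; exact h.sup_ann, by rw [inf_comm]; exact h.inf_ann⟩

lemma IsComplEl.ann_ann {a : C} (h : IsComplEl a) : ann (ann a) = a :=
  ann_eq_of_compl (by rw [sup_comm]; exact h.sup_ann) (by rw [inf_comm]; exact h.inf_ann)

lemma IsComplEl.comm_eq_inf {a : C} (h : IsComplEl a) (b : C) : comm a b = a ⊓ b := by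
  apply le_antisymm (comm_le_inf a b)
  calc a ⊓ b = comm (a ⊓ b) ⊤ := (comm_top _).symm
    _ = comm (a ⊓ b) (a ⊔ ann a) := by rw [h.sup_ann]
    _ = comm (a ⊓ b) a ⊔ comm (a ⊓ b) (ann a) := comm_sup_right _ _ _
    _ ≤ comm b a ⊔ ⊥ := by
        apply sup_le
        · exact le_sup_left.trans' (comm_mono_l a inf_le_right)
        · exact le_sup_right.trans' ((comm_mono_l (ann a) inf_le_left).trans (comm_ann a).le)
    _ = comm a b := by rw [sup_bot_eq, comm_comm]

lemma isComplEl_bot : IsComplEl (⊥ : C) := ⟨⊤, by simp, by simp⟩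

lemma isComplEl_top : IsComplEl (⊤ : C) := ⟨⊥, by simp, by simp⟩

lemma comm_sup_sup (t u a b : C) : comm (t ⊔ a) (u ⊔ b) ≤ (t ⊔ u) ⊔ comm a b := by
  rw [comm_sup_left, comm_sup_right, comm_sup_right]
  apply sup_le (sup_le ?_ ?_) (sup_le ?_ ?_)
  · exact ((comm_le_inf t u).trans inf_le_left).trans (le_sup_left.trans le_sup_left)
  · exact ((comm_le_inf t b).trans inf_le_left).trans (le_sup_left.trans le_sup_left)
  · exact ((comm_le_inf a u).trans inf_le_right).trans (le_sup_right.trans le_sup_left)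
  · exact le_sup_right

lemma not_sup_sup {p a b : C} (hp : p ≠ ⊤) (ha : p ⊔ a = ⊤) (hb : p ⊔ b = ⊤)
    (hab : comm a b = ⊥) : False := by
  apply hp
  apply top_le_iff.mp
  calc (⊤ : C) = comm (p ⊔ a) (p ⊔ b) := by rw [ha, hb, comm_top]
    _ ≤ (p ⊔ p) ⊔ comm a b := comm_sup_sup p p a b
    _ = p := by rw [hab, sup_idem, sup_bot_eq]

lemma exists_maximal_ge {x : C} (hx : x ≠ ⊤) : ∃ m : C, IsMaximal m ∧ x ≤ m := by
  have hco := CompleteLattice.coatomic_of_top_compact (α := C) top_isCompact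
  rcases hco.eq_top_or_exists_le_coatom x with h | ⟨m, hm, hxm⟩
  · exact absurd h hx
  · refine ⟨m, ⟨hm.1, fun q hq hle => ?_⟩, hxm⟩
    rcases hle.lt_or_eq with h' | h'
    · exact absurd (hm.2 q h') hq
    · exact h'.symm

lemma IsMaximal.sup_eq_top_of_not_le {m a : C} (hm : IsMaximal m) (h : ¬ a ≤ m) :
    m ⊔ a = ⊤ := by
  by_contra h'
  have := hm.2 _ h' le_sup_left
  exact h (le_sup_right.trans this.le)

lemma IsMaximal.isPrime {m : C} (hm : IsMaximal m) : IsPrime m := by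
  refine ⟨hm.1, fun a b hab => ?_⟩
  by_contra h
  push_neg at h
  apply hm.1
  apply top_le_iff.mp
  calc (⊤ : C) = comm (m ⊔ a) (m ⊔ b) := by
        rw [hm.sup_eq_top_of_not_le h.1, hm.sup_eq_top_of_not_le h.2, comm_top]
    _ ≤ (m ⊔ m) ⊔ comm a b := comm_sup_sup m m a b
    _ ≤ m := by rw [sup_idem]; exact sup_le le_rfl hab

lemma maximal_sup_eq_top {p q : C} (hp : IsMaximal p) (hq : IsMaximal q) (hne : p ≠ q) :
    p ⊔ q = ⊤ := by
  by_contra h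
  have h1 := hp.2 _ h le_sup_left
  have h2 := hq.2 _ h le_sup_right
  exact hne (h1.symm.trans h2)

lemma IsComplEl.isCompact {a : C} (h : IsComplEl a) : IsCompactElement a := by
  classical
  obtain ⟨s, hs, hsup⟩ := compactlyGenerated a
  have htop : (⊤ : C) ≤ sSup (insert (ann a) s) := by
    rw [sSup_insert, hsup, sup_comm]
    exact h.sup_ann.ge
  obtain ⟨F, hFs, hF⟩ := (CompleteLattice.isCompactElement_iff_exists_le_sSup_of_le_sSup (k := (⊤ : C))).mp top_isCompact _ htop
  set c := (F.filter (fun x => x ∈ s)).sup id with hc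
  have hFc : F.sup id ≤ ann a ⊔ c := by
    apply Finset.sup_le
    intro x hx
    rcases hFs hx with rfl | hxs
    · exact le_sup_left
    · exact le_sup_right.trans' (Finset.le_sup (f := id) (Finset.mem_filter.mpr ⟨hx, hxs⟩))
  have hac : a ≤ c := by
    calc a = comm a ⊤ := (comm_top a).symm
      _ ≤ comm a (ann a ⊔ c) := comm_mono_r a (top_le_iff.mp (hF.trans hFc)).ge
      _ = comm a (ann a) ⊔ comm a c := comm_sup_right _ _ _
      _ ≤ ⊥ ⊔ c := sup_le_sup (comm_ann a).le (comm_le_inf a c |>.trans inf_le_right)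
      _ = c := bot_sup_eq c
  have hca : c ≤ a := by
    apply Finset.sup_le
    intro x hx
    have hxs := (Finset.mem_filter.mp hx).2
    exact hsup ▸ le_sSup hxs
  have hcc : IsCompactElement c :=
    CompleteLattice.isCompactElement_finsetSup _
      (fun x hx => hs x (Finset.mem_filter.mp hx).2)
  rwa [(le_antisymm hac hca : a = c)]

lemma compl_inf {a b : C} (ha : IsComplEl a) (hb : IsComplEl b) :
    (a ⊓ b) ⊔ (ann a ⊔ ann b) = ⊤ ∧ (a ⊓ b) ⊓ (ann a ⊔ ann b) = ⊥ := by
  constructor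
  · apply top_le_iff.mp
    calc (⊤ : C) = comm (a ⊔ ann a) (b ⊔ ann b) := by rw [ha.sup_ann, hb.sup_ann, comm_top]
      _ = (comm a b ⊔ comm a (ann b)) ⊔ (comm (ann a) b ⊔ comm (ann a) (ann b)) := by
          rw [comm_sup_left, comm_sup_right, comm_sup_right]
      _ ≤ (a ⊓ b) ⊔ (ann a ⊔ ann b) := by
          apply sup_le (sup_le ?_ ?_) (sup_le ?_ ?_)
          · exact (comm_le_inf a b).trans le_sup_left
          · exact ((comm_le_inf a (ann b)).trans inf_le_right).trans
              (le_sup_right.trans le_sup_right)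
          · exact ((comm_le_inf (ann a) b).trans inf_le_left).trans
              (le_sup_left.trans le_sup_right)
          · exact ((comm_le_inf (ann a) (ann b)).trans inf_le_left).trans
              (le_sup_left.trans le_sup_right)
  · apply le_bot_iff.mp
    have h1 : (a ⊓ b) ⊓ (ann a ⊔ ann b) ≤ b ⊓ (ann a ⊔ ann b) :=
      inf_le_inf_right _ inf_le_right
    have h2 : b ⊓ (ann a ⊔ ann b) ≤ ann a := by
      rw [← hb.comm_eq_inf, comm_sup_right]
      exact sup_le (comm_le_inf b (ann a) |>.trans inf_le_right) ((comm_ann b).le.trans bot_le)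
    have h3 : (a ⊓ b) ⊓ (ann a ⊔ ann b) ≤ a ⊓ ann a :=
      le_inf (inf_le_left.trans inf_le_left) (h1.trans h2)
    exact h3.trans ha.inf_ann.le

lemma IsComplEl.inf {a b : C} (ha : IsComplEl a) (hb : IsComplEl b) : IsComplEl (a ⊓ b) :=
  ⟨ann a ⊔ ann b, (compl_inf ha hb).1, (compl_inf ha hb).2⟩

lemma IsComplEl.sup {a b : C} (ha : IsComplEl a) (hb : IsComplEl b) : IsComplEl (a ⊔ b) := by
  have h := compl_inf ha.ann_isComplEl hb.ann_isComplEl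
  rw [ha.ann_ann, hb.ann_ann] at h
  exact ⟨ann a ⊓ ann b, by rw [sup_comm]; exact h.1, by rw [inf_comm]; exact h.2⟩

lemma isComplEl_finsetSup {F : Finset C} (h : ∀ x ∈ F, IsComplEl x) :
    IsComplEl (F.sup id) :=
  Finset.sup_induction isComplEl_bot (fun a ha b hb => ha.sup hb) h

lemma sup_inf_eq_top {t a b : C} (h1 : t ⊔ a = ⊤) (h2 : t ⊔ b = ⊤) : t ⊔ (a ⊓ b) = ⊤ := by
  apply top_le_iff.mp
  calc (⊤ : C) = comm (t ⊔ a) (t ⊔ b) := by rw [h1, h2, comm_top]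
    _ ≤ (t ⊔ t) ⊔ comm a b := comm_sup_sup t t a b
    _ ≤ t ⊔ (a ⊓ b) := by rw [sup_idem]; exact sup_le_sup le_rfl (comm_le_inf a b)

lemma O_le_of_prime {p : C} (hp : IsPrime p) : O p ≤ p := by
  apply _root_.sSup_le
  rintro a ⟨hc, hna⟩
  exact (hp.2 a (ann a) (by rw [comm_ann]; exact bot_le)).resolve_right hna

lemma le_O {a p : C} (hc : IsCompactElement a) (h : ¬ ann a ≤ p) : a ≤ O p :=
  le_sSup ⟨hc, h⟩

lemma exists_compl_inf (t : C) (G : Finset C)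
    (h : ∀ x ∈ G, ∃ y : C, IsComplEl y ∧ t ⊔ y = ⊤ ∧ x = ann y) :
    ∃ a : C, IsComplEl a ∧ t ⊔ a = ⊤ ∧ comm a (G.sup id) = ⊥ := by
  classical
  induction G using Finset.induction_on with
  | empty =>
      exact ⟨⊤, isComplEl_top, by simp, by rw [Finset.sup_empty]; exact comm_bot_right ⊤⟩
  | @insert x G hxG ih =>
      obtain ⟨a, ha, hta, hcomm⟩ := ih (fun z hz => h z (Finset.mem_insert_of_mem hz))
      obtain ⟨y, hy, hty, hxy⟩ := h x (Finset.mem_insert_self _ _)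
      refine ⟨a ⊓ y, ha.inf hy, sup_inf_eq_top hta hty, ?_⟩
      rw [Finset.sup_insert]
      apply le_bot_iff.mp
      rw [comm_sup_right]
      apply sup_le
      · calc comm (a ⊓ y) (id x) ≤ comm y x := comm_mono_l x inf_le_right
          _ ≤ ⊥ := by rw [hxy, comm_ann y]
      · exact (comm_mono_l _ inf_le_left).trans hcomm.le

end Aux

theorem statement10 (hstar : Star C) :
    (BNormal C ↔ ∀ p q : C, IsMaximal p → IsMaximal q → p ≠ q →
      ∃ a : C, IsComplEl a ∧ a ≤ p ∧ ann a ≤ q) ∧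
    (BNormal C ↔ ∀ p q : C, IsMaximal p → IsMaximal q → p ≠ q →
      ∃ a : C, IsComplEl a ∧ a ≤ O p ∧ ann a ≤ O q) := by
  classical
  have P12 : BNormal C → ∀ p q : C, IsMaximal p → IsMaximal q → p ≠ q →
      ∃ a : C, IsComplEl a ∧ a ≤ p ∧ ann a ≤ q := by
    intro hB p q hp hq hne
    obtain ⟨a, b, hca, hcb, hpa, hqb, hab⟩ := hB p q (maximal_sup_eq_top hp hq hne)
    refine ⟨ann a, hca.ann_isComplEl, ?_, ?_⟩
    · by_contra h
      exact not_sup_sup hp.1 hpa (hp.sup_eq_top_of_not_le h) (comm_ann a)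
    · rw [hca.ann_ann]
      have hannb : ann b ≤ q := by
        by_contra h
        exact not_sup_sup hq.1 hqb (hq.sup_eq_top_of_not_le h) (comm_ann b)
      exact (le_ann_of (by rw [comm_comm, hab])).trans hannb
  have P21 : (∀ p q : C, IsMaximal p → IsMaximal q → p ≠ q →
      ∃ a : C, IsComplEl a ∧ a ≤ p ∧ ann a ≤ q) → BNormal C := by
    intro hP t u htu
    by_cases ht : t = ⊤
    · exact ⟨⊥, ⊤, isComplEl_bot, isComplEl_top, by rw [ht]; simp, by simp, comm_bot_left ⊤⟩
    by_cases hu : u = ⊤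
    · exact ⟨⊤, ⊥, isComplEl_top, isComplEl_bot, by simp, by rw [hu]; simp, comm_bot_right ⊤⟩
    have stepA : ∀ p : C, IsMaximal p → u ≤ p →
        ∃ b : C, IsComplEl b ∧ b ≤ p ∧ t ⊔ b = ⊤ := by
      intro p hp hup
      have hchoice : ∀ q : C, IsMaximal q → t ≤ q →
          ∃ a : C, IsComplEl a ∧ a ≤ p ∧ ann a ≤ q := by
        intro q hq htq
        apply hP p q hp hq
        intro hpq
        apply hp.1
        apply top_le_iff.mp
        rw [← htu]
        exact sup_le (hpq ▸ htq) hup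
      choose f hf1 hf2 hf3 using hchoice
      set S : Set C := {x | ∃ q, ∃ (hq : IsMaximal q) (htq : t ≤ q), x = f q hq htq} with hS
      have hTS : t ⊔ sSup S = ⊤ := by
        by_contra h
        obtain ⟨m, hm, hle⟩ := exists_maximal_ge h
        have htm : t ≤ m := le_sup_left.trans hle
        have h1 : f m hm htm ≤ m :=
          (le_sSup (show f m hm htm ∈ S from ⟨m, hm, htm, rfl⟩)).trans
            (le_sup_right.trans hle)
        apply hm.1
        apply top_le_iff.mp
        rw [← (hf1 m hm htm).sup_ann]
        exact sup_le h1 (hf3 m hm htm)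
      have htop : (⊤ : C) ≤ sSup (insert t S) := by rw [sSup_insert, hTS]
      obtain ⟨F, hFsub, hFle⟩ := (CompleteLattice.isCompactElement_iff_exists_le_sSup_of_le_sSup (k := (⊤ : C))).mp top_isCompact _ htop
      set b := (F.filter (fun x => x ∈ S)).sup id with hb
      have hFb : F.sup id ≤ t ⊔ b := by
        apply Finset.sup_le
        intro x hx
        rcases hFsub hx with rfl | hxS
        · exact le_sup_left
        · exact le_sup_right.trans' (Finset.le_sup (f := id) (Finset.mem_filter.mpr ⟨hx, hxS⟩))
      have hbS : ∀ x ∈ F.filter (fun x => x ∈ S), IsComplEl x ∧ x ≤ p := by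
        intro x hx
        obtain ⟨q, hq, htq, rfl⟩ := (Finset.mem_filter.mp hx).2
        exact ⟨hf1 q hq htq, hf2 q hq htq⟩
      exact ⟨b, isComplEl_finsetSup (fun x hx => (hbS x hx).1),
        Finset.sup_le (fun x hx => (hbS x hx).2),
        top_le_iff.mp (hFle.trans hFb)⟩
    choose g hg1 hg2 hg3 using stepA
    set S2 : Set C := {x | ∃ p, ∃ (hp : IsMaximal p) (hup : u ≤ p), x = ann (g p hp hup)}
      with hS2
    have hUS : u ⊔ sSup S2 = ⊤ := by
      by_contra h
      obtain ⟨m, hm, hle⟩ := exists_maximal_ge h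
      have hum : u ≤ m := le_sup_left.trans hle
      have h1 : ann (g m hm hum) ≤ m :=
        (le_sSup (show ann (g m hm hum) ∈ S2 from ⟨m, hm, hum, rfl⟩)).trans
          (le_sup_right.trans hle)
      apply hm.1
      apply top_le_iff.mp
      rw [← (hg1 m hm hum).sup_ann]
      exact sup_le ((hg2 m hm hum).trans le_rfl) h1
    have htop : (⊤ : C) ≤ sSup (insert u S2) := by rw [sSup_insert, hUS]
    obtain ⟨F, hFsub, hFle⟩ := (CompleteLattice.isCompactElement_iff_exists_le_sSup_of_le_sSup (k := (⊤ : C))).mp top_isCompact _ htop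
    set b := (F.filter (fun x => x ∈ S2)).sup id with hbdef
    have hFb : F.sup id ≤ u ⊔ b := by
      apply Finset.sup_le
      intro x hx
      rcases hFsub hx with rfl | hxS
      · exact le_sup_left
      · exact le_sup_right.trans' (Finset.le_sup (f := id) (Finset.mem_filter.mpr ⟨hx, hxS⟩))
    have hub : u ⊔ b = ⊤ := top_le_iff.mp (hFle.trans hFb)
    obtain ⟨a, ha, hta, hca⟩ := exists_compl_inf t (F.filter (fun x => x ∈ S2)) (by
      intro x hx
      obtain ⟨p, hp, hup, rfl⟩ := (Finset.mem_filter.mp hx).2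
      exact ⟨g p hp hup, hg1 p hp hup, hg3 p hp hup, rfl⟩)
    have hbcompl : IsComplEl b := by
      apply isComplEl_finsetSup
      intro x hx
      obtain ⟨p, hp, hup, rfl⟩ := (Finset.mem_filter.mp hx).2
      exact (hg1 p hp hup).ann_isComplEl
    exact ⟨a, b, ha, hbcompl, hta, hub, hca⟩
  have P23 : (∀ p q : C, IsMaximal p → IsMaximal q → p ≠ q →
      ∃ a : C, IsComplEl a ∧ a ≤ p ∧ ann a ≤ q) →
      ∀ p q : C, IsMaximal p → IsMaximal q → p ≠ q →
      ∃ a : C, IsComplEl a ∧ a ≤ O p ∧ ann a ≤ O q := by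
    intro h p q hp hq hne
    obtain ⟨a, hca, hap, haq⟩ := h p q hp hq hne
    refine ⟨a, hca, le_O hca.isCompact ?_, ?_⟩
    · intro hle
      exact hp.1 (top_le_iff.mp (by rw [← hca.sup_ann]; exact sup_le hap hle))
    · apply le_O hca.ann_isComplEl.isCompact
      rw [hca.ann_ann]
      intro hle
      exact hq.1 (top_le_iff.mp (by rw [← hca.sup_ann]; exact sup_le hle haq))
  have P32 : (∀ p q : C, IsMaximal p → IsMaximal q → p ≠ q →
      ∃ a : C, IsComplEl a ∧ a ≤ O p ∧ ann a ≤ O q) →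
      ∀ p q : C, IsMaximal p → IsMaximal q → p ≠ q →
      ∃ a : C, IsComplEl a ∧ a ≤ p ∧ ann a ≤ q := by
    intro h p q hp hq hne
    obtain ⟨a, hca, hap, haq⟩ := h p q hp hq hne
    exact ⟨a, hca, hap.trans (O_le_of_prime hp.isPrime),
      haq.trans (O_le_of_prime hq.isPrime)⟩
  exact ⟨⟨P12, P21⟩, ⟨fun h => P23 (P12 h), fun h => P21 (P32 h)⟩⟩


end CommutatorLattice
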